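/- arXiv:math/0312081 — 4 statements merged into one kernel-verified Lean document; each statement's English description precedes it below -/
import Mathlib

section
/- Let μ be a probability measure on a measurable space, h ≥ 0 a measurable function with ∫ h dμ = 1, and ν = h·μ a probability measure with H(ν,μ) ≤ 1/2. Let a > e^{3/2}; then ν(h ≤ a) > 0 and the truncated measure ν_a = (1/ν(h ≤ a))·h·1_{h ≤ a}·μ satisfies H(ν_a, μ) ≤ ( 1 + 1/(2·(log a − 3/2)) + 2/(log a − 1) )·H(ν,μ). -/
open MeasureTheory ENNReal
open scoped Classical

noncomputable section
set_option maxHeartbeats 1000000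

/-- Relative entropy (Kullback-Leibler information) `H(ν,μ)`:
`∫ log (dν/dμ) dν` if `ν ≪ μ` (and the integral exists), `+∞` otherwise. -/
def relEnt {Ω : Type*} [MeasurableSpace Ω] (ν μ : Measure Ω) : ℝ≥0∞ :=
  if ν ≪ μ ∧ Integrable (fun x => Real.log ((ν.rnDeriv μ) x).toReal) ν
  then ENNReal.ofReal (∫ x, Real.log ((ν.rnDeriv μ) x).toReal ∂ν)
  else ∞

/-- The measure `ν = h·μ`. -/
def densMeas {Ω : Type*} [MeasurableSpace Ω] (μ : Measure Ω) (h : Ω → ℝ) : Measure Ω :=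
  μ.withDensity fun x => ENNReal.ofReal (h x)

/-- The truncated measure `ν_a = (1/ν(h ≤ a)) · h · 1_{h ≤ a} · μ` for `ν = h·μ`. -/
def truncMeas {Ω : Type*} [MeasurableSpace Ω] (μ : Measure Ω) (h : Ω → ℝ) (a : ℝ) : Measure Ω :=
  ((densMeas μ h) {x | h x ≤ a})⁻¹ • (densMeas μ h).restrict {x | h x ≤ a}

lemma aux_sub_one_le_mul_log {x : ℝ} (hx : 0 ≤ x) : x - 1 ≤ x * Real.log x := by
  rcases eq_or_lt_of_le hx with h | h
  · simp [← h]
  · have h2 := Real.log_le_sub_one_of_pos (inv_pos.2 h)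
    rw [Real.log_inv] at h2
    have h3 : x * (1 - x⁻¹) ≤ x * Real.log x :=
      mul_le_mul_of_nonneg_left (by linarith) hx
    have h4 : x * x⁻¹ = 1 := mul_inv_cancel₀ (ne_of_gt h)
    nlinarith

lemma relEnt_withDensity {Ω : Type*} [MeasurableSpace Ω] (μ : Measure Ω) [SigmaFinite μ]
    {f : Ω → ℝ} (hf : Measurable f) (h0 : ∀ x, 0 ≤ f x) :
    relEnt (μ.withDensity fun x => ENNReal.ofReal (f x)) μ
      = if Integrable (fun x => f x * Real.log (f x)) μ
        then ENNReal.ofReal (∫ x, f x * Real.log (f x) ∂μ) else ∞ := by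
  set ν := μ.withDensity fun x => ENNReal.ofReal (f x) with hν
  have hac : ν ≪ μ := withDensity_absolutelyContinuous μ _
  have hrnμ : ν.rnDeriv μ =ᵐ[μ] fun x => ENNReal.ofReal (f x) :=
    Measure.rnDeriv_withDensity μ hf.ennreal_ofReal
  have hrnν : ν.rnDeriv μ =ᵐ[ν] fun x => ENNReal.ofReal (f x) := hrnμ.filter_mono hac.ae_le
  have heq : (fun x => Real.log ((ν.rnDeriv μ) x).toReal) =ᵐ[ν] fun x => Real.log (f x) := by
    filter_upwards [hrnν] with x hx
    rw [hx, ENNReal.toReal_ofReal (h0 x)]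
  have hii : Integrable (fun x => Real.log ((ν.rnDeriv μ) x).toReal) ν
      ↔ Integrable (fun x => f x * Real.log (f x)) μ := by
    rw [integrable_congr heq, hν, integrable_withDensity_iff hf.ennreal_ofReal
      (ae_of_all _ fun x => ENNReal.ofReal_lt_top)]
    apply integrable_congr
    refine ae_of_all _ fun x => ?_
    simp only [ENNReal.toReal_ofReal (h0 x), mul_comm]
  by_cases hi : Integrable (fun x => f x * Real.log (f x)) μ
  · rw [relEnt, if_pos ⟨hac, hii.2 hi⟩, if_pos hi]
    congr 1
    rw [integral_congr_ae heq]
    have hrepr : ν = μ.withDensity fun x => ((f x).toNNReal : ℝ≥0∞) := rfl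
    rw [hrepr, integral_withDensity_eq_integral_smul hf.real_toNNReal]
    refine integral_congr_ae (ae_of_all _ fun x => ?_)
    simp [NNReal.smul_def, Real.coe_toNNReal _ (h0 x)]
  · rw [relEnt, if_neg, if_neg hi]
    rintro ⟨-, hI⟩
    exact hi (hii.1 hI)

/-- **Lemma 3.5.** For `ν = h·μ` with `H(ν,μ) ≤ 1/2` and `a > e^{3/2}`, the truncated measure
`ν_a` satisfies `H(ν_a,μ) ≤ (1 + 1/(2(log a - 3/2)) + 2/(log a - 1)) H(ν,μ)`. -/
theorem entropy_trunc_le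
    {Ω : Type*} [MeasurableSpace Ω] (μ : Measure Ω) (hprob : IsProbabilityMeasure μ)
    (h : Ω → ℝ) (hmeas : Measurable h) (hpos : ∀ x, 0 ≤ h x)
    (hint : IsProbabilityMeasure (densMeas μ h))
    (hH : relEnt (densMeas μ h) μ ≤ 1 / 2)
    (a : ℝ) (ha : a > Real.exp (3 / 2)) :
    0 < densMeas μ h {x | h x ≤ a} ∧
      relEnt (truncMeas μ h a) μ ≤
        ENNReal.ofReal (1 + 1 / (2 * (Real.log a - 3 / 2)) + 2 / (Real.log a - 1)) *
          relEnt (densMeas μ h) μ := by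
  have ha0 : (0:ℝ) < a := lt_trans (Real.exp_pos _) ha
  set L := Real.log a with hLdef
  have hL : 3/2 < L := (Real.lt_log_iff_exp_lt ha0).2 ha
  set g : Ω → ℝ≥0∞ := fun x => ENNReal.ofReal (h x) with hgdef
  have hgmeas : Measurable g := hmeas.ennreal_ofReal
  set ν := densMeas μ h with hνdef
  -- h is integrable
  have hlint : ∫⁻ x, g x ∂μ = 1 := by
    have := hint.measure_univ
    rwa [hνdef, densMeas, withDensity_apply _ MeasurableSet.univ, Measure.restrict_univ] at this
  have hInth : Integrable h μ := by
    have := integrable_toReal_of_lintegral_ne_top hgmeas.aemeasurable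
      (by rw [hlint]; exact one_ne_top)
    refine this.congr (ae_of_all _ fun x => ?_)
    simp [hgdef, ENNReal.toReal_ofReal (hpos x)]
  have hinth1 : ∫ x, h x ∂μ = 1 := by
    have : ENNReal.ofReal (∫ x, h x ∂μ) = 1 := by
      rw [ofReal_integral_eq_lintegral_ofReal hInth (ae_of_all _ hpos)]; exact hlint
    exact ENNReal.ofReal_eq_one.1 this
  -- the entropy of ν
  set φ : Ω → ℝ := fun x => h x * Real.log (h x) with hφdef
  have hEntIf := relEnt_withDensity μ hmeas hpos
  rw [show (μ.withDensity fun x => ENNReal.ofReal (h x)) = ν from rfl] at hEntIf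
  have hφ : Integrable φ μ := by
    by_contra hc
    rw [hEntIf, if_neg hc] at hH
    simp at hH
  set H := ∫ x, φ x ∂μ with hHdef
  have hEnt : relEnt ν μ = ENNReal.ofReal H := by rw [hEntIf, if_pos hφ]
  have hH2 : H ≤ 1/2 := by
    rw [hEnt] at hH
    have : ENNReal.ofReal H ≤ ENNReal.ofReal (1/2) := by
      rwa [show ENNReal.ofReal (1/2) = (1/2 : ℝ≥0∞) by
        rw [ENNReal.ofReal_div_of_pos (by norm_num)]; norm_num]
    exact (ENNReal.ofReal_le_ofReal_iff (by norm_num)).1 this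
  have hHnn : 0 ≤ H := by
    have h1 : ∫ x, (h x - 1) ∂μ ≤ H :=
      integral_mono (hInth.sub (integrable_const 1)) hφ fun x => aux_sub_one_le_mul_log (hpos x)
    rwa [integral_sub hInth (integrable_const 1), hinth1, integral_const,
      probReal_univ, smul_eq_mul, mul_one, sub_self] at h1
  -- the truncation set
  set T := {x | h x ≤ a} with hTdef
  have hT : MeasurableSet T := measurableSet_le hmeas measurable_const
  set z := ∫ x in T, h x ∂μ with hzdef
  set m := ∫ x in Tᶜ, h x ∂μ with hmdef
  have hzm : z + m = 1 := by rw [hzdef, hmdef, integral_add_compl hT hInth, hinth1]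
  have hz0 : 0 ≤ z := setIntegral_nonneg hT fun x _ => hpos x
  have hm0 : 0 ≤ m := setIntegral_nonneg hT.compl fun x _ => hpos x
  set HT := ∫ x in T, φ x ∂μ with hHTdef
  set Hc := ∫ x in Tᶜ, φ x ∂μ with hHcdef
  have hsplit : HT + Hc = H := by rw [hHTdef, hHcdef, integral_add_compl hT hφ]
  -- key bound on the tail
  have hkey : m * L ≤ Hc := by
    have hmono : ∫ x in Tᶜ, (h x * L) ∂μ ≤ Hc := by
      refine setIntegral_mono_on ((hInth.mul_const L).restrict) (hφ.restrict) hT.compl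
        fun x hx => ?_
      have hax : a < h x := not_le.1 hx
      exact mul_le_mul_of_nonneg_left (Real.log_le_log ha0 hax.le) (hpos x)
    rwa [integral_mul_const] at hmono
  -- lower bound on HT
  have hHT_lb : z - 1 ≤ HT := by
    have h1 : ∫ x in T, (h x - 1) ∂μ ≤ HT :=
      integral_mono ((hInth.restrict).sub (integrable_const 1)) (hφ.restrict)
        fun x => aux_sub_one_le_mul_log (hpos x)
    have h2 : ∫ x in T, (h x - 1) ∂μ = z - (μ T).toReal := by
      rw [integral_sub hInth.restrict (integrable_const 1), integral_const,
        measureReal_restrict_apply_univ, smul_eq_mul, mul_one, measureReal_def]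
    have h3 : (μ T).toReal ≤ 1 := by
      have := ENNReal.toReal_mono (measure_ne_top μ Set.univ) (measure_mono (Set.subset_univ T))
      rwa [measure_univ, ENNReal.toReal_one] at this
    linarith
  have hmL1 : m * (L - 1) ≤ H := by nlinarith
  have hzpos : 0 < z := by nlinarith
  have hm1 : 2 * (m * (L-1)) ≤ 1 := by linarith
  -- ν T
  have hZ : ν T = ENNReal.ofReal z := by
    rw [hνdef, densMeas, withDensity_apply _ hT,
      ← ofReal_integral_eq_lintegral_ofReal hInth.restrict (ae_of_all _ hpos)]
  have hpart1 : 0 < ν T := by rw [hZ]; exact ENNReal.ofReal_pos.2 hzpos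
  refine ⟨hpart1, ?_⟩
  -- the truncated measure as a density measure
  set k : Ω → ℝ := T.indicator (fun y => z⁻¹ * h y) with hkdef
  have hkmeas : Measurable k := (measurable_const.mul hmeas).indicator hT
  have hknn : ∀ x, 0 ≤ k x := fun x => by
    rw [hkdef]
    by_cases hx : x ∈ T
    · rw [Set.indicator_of_mem hx]; exact mul_nonneg (inv_nonneg.2 hz0) (hpos x)
    · rw [Set.indicator_of_notMem hx]
  have hνa : truncMeas μ h a = μ.withDensity fun x => ENNReal.ofReal (k x) := by
    rw [truncMeas, ← hνdef, ← hTdef, hZ]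
    have e1 : ν.restrict T = μ.withDensity (T.indicator g) := by
      rw [hνdef, densMeas, restrict_withDensity hT, ← withDensity_indicator hT]
    rw [e1, ← withDensity_smul _ (hgmeas.indicator hT)]
    congr 1
    funext x
    by_cases hx : x ∈ T
    · simp only [Pi.smul_apply, Set.indicator_of_mem hx, smul_eq_mul, hkdef, hgdef]
      rw [ENNReal.ofReal_mul (inv_nonneg.2 hz0), ENNReal.ofReal_inv_of_pos hzpos]
    · simp only [Pi.smul_apply, Set.indicator_of_mem, Set.indicator_of_notMem hx, smul_eq_mul,
        mul_zero, hkdef]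
      simp
  -- integrand identity for k log k
  have hklogk : (fun x => k x * Real.log (k x))
      = T.indicator (fun y => z⁻¹ * φ y - (z⁻¹ * Real.log z) * h y) := by
    funext x
    by_cases hx : x ∈ T
    · rw [hkdef, Set.indicator_of_mem hx, Set.indicator_of_mem hx]
      rcases eq_or_lt_of_le (hpos x) with h0 | h0
      · simp [hφdef, ← h0]
      · rw [Real.log_mul (by positivity) (ne_of_gt h0), Real.log_inv, hφdef]
        ring
    · rw [hkdef, Set.indicator_of_notMem hx, Set.indicator_of_notMem hx, zero_mul]
  have hkint : Integrable (fun x => k x * Real.log (k x)) μ := by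
    rw [hklogk]
    exact ((hφ.const_mul _).sub (hInth.const_mul _)).indicator hT
  -- value of the truncated entropy
  have hval : ∫ x, k x * Real.log (k x) ∂μ = z⁻¹ * HT - Real.log z := by
    rw [hklogk, integral_indicator hT,
      integral_sub ((hφ.const_mul _).restrict) ((hInth.const_mul _).restrict),
      integral_const_mul, integral_const_mul, ← hHTdef, ← hzdef]
    have : z⁻¹ * Real.log z * z = Real.log z := by
      field_simp
    rw [this]
  have hEnta : relEnt (truncMeas μ h a) μ = ENNReal.ofReal (z⁻¹ * HT - Real.log z) := by
    rw [hνa, relEnt_withDensity μ hkmeas hknn, if_pos hkint, hval]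
  -- the real inequality
  set C := 1 + 1 / (2 * (L - 3/2)) + 2 / (L - 1) with hCdef
  have hu : (0:ℝ) < 2 * (L - 3/2) := by linarith
  have hv : (0:ℝ) < L - 1 := by linarith
  have hC0 : 0 ≤ C := by positivity
  have hfinal : z⁻¹ * HT - Real.log z ≤ C * H := by
    -- -log z ≤ z⁻¹ - 1
    have hlog : -Real.log z ≤ z⁻¹ - 1 := by
      have := Real.log_le_sub_one_of_pos (inv_pos.2 hzpos)
      rwa [Real.log_inv] at this
    have hm' : m ≤ 1 / (2 * (L - 1)) := by
      rw [le_div_iff₀ (by linarith)]; linarith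
    have hzlb : 1 - 1 / (2 * (L - 1)) ≤ z := by
      have : z = 1 - m := by linarith
      rw [this]; linarith
    have hCz : 1 ≤ C * z := by
      have e1 : (1 + 1 / (2 * (L - 3/2))) * (1 - 1 / (2 * (L - 1))) = 1 := by
        have h3 : 2 * (L - 3/2) = 2*L - 3 := by ring
        have h4 : 2 * (L - 1) = 2*L - 2 := by ring
        have h5 : 2*L - 3 ≠ 0 := ne_of_gt (by linarith)
        have h6 : 2*L - 2 ≠ 0 := ne_of_gt (by linarith)
        rw [h3, h4]
        field_simp
        ring
      have e2 : (1 + 1 / (2 * (L - 3/2))) * (1 - 1 / (2 * (L - 1))) ≤ C * z := by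
        apply mul_le_mul
        · rw [hCdef]; have : 0 ≤ 2 / (L-1) := by positivity
          linarith
        · exact hzlb
        · have : 1 / (2 * (L - 1)) ≤ 1 := by
            rw [div_le_one (by linarith)]; linarith
          linarith
        · exact hC0
      exact le_of_eq_of_le e1.symm e2
    -- HT + m ≤ H
    have hHTm : HT + m ≤ H := by nlinarith
    -- combine
    have step1 : z⁻¹ * HT - Real.log z ≤ (HT + m) * z⁻¹ := by
      have hzz : z * z⁻¹ = 1 := mul_inv_cancel₀ (ne_of_gt hzpos)
      have e : m * z⁻¹ = z⁻¹ - 1 := by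
        rw [show m = 1 - z by linarith, sub_mul, one_mul, hzz]
      have e' : (HT + m) * z⁻¹ = z⁻¹ * HT + m * z⁻¹ := by ring
      linarith
    have step2 : (HT + m) * z⁻¹ ≤ H * z⁻¹ :=
      mul_le_mul_of_nonneg_right hHTm (le_of_lt (inv_pos.2 hzpos))
    have step3 : H * z⁻¹ ≤ C * H := by
      have hinvz : z⁻¹ ≤ C := by
        rw [← one_div, div_le_iff₀ hzpos]
        exact hCz
      calc H * z⁻¹ ≤ H * C := mul_le_mul_of_nonneg_left hinvz hHnn
        _ = C * H := mul_comm _ _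
    linarith
  rw [hEnta, hEnt, ← ENNReal.ofReal_mul hC0]
  exact ENNReal.ofReal_le_ofReal hfinal

end
end

section
/- Let (E,d) be a complete separable metric space, x₀ ∈ E, and μ a Borel probability measure on E with ∫ d(y,x₀)² dμ(y) < ∞. Let ν = h·μ be a probability measure with ∫ d(x,x₀)² dν(x) < ∞, and let a > 0 be such that ν(h ≤ a) > 0, with truncated measure ν_a. Then W₂²(ν,μ) ≤ W₂²(ν_a,μ) + ∫ q₂(x)·h(x)·1_{h > a}(x) dμ(x), where q₂(x) = 2·d(x,x₀)² + 2·∫ d(y,x₀)² dμ(y). -/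
open MeasureTheory ENNReal
open scoped Classical

noncomputable section

/-- `π` is a coupling of the probability measures `μ` and `ν`:
its marginal distributions are `μ` and `ν`. -/
def IsCoupling {E : Type*} [MeasurableSpace E] (π : Measure (E × E)) (μ ν : Measure E) : Prop :=
  π.map Prod.fst = μ ∧ π.map Prod.snd = ν

/-- The `p`-th power of the `L^p` Wasserstein distance, `W_p^p(μ,ν)`, as the infimum of the
transportation cost over all couplings. -/
def Wcost {E : Type*} [MetricSpace E] [MeasurableSpace E] (p : ℝ) (μ ν : Measure E) : ℝ≥0∞ :=
  ⨅ (π : Measure (E × E)) (_ : IsProbabilityMeasure π) (_ : IsCoupling π μ ν),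
    ∫⁻ z, ENNReal.ofReal (dist z.1 z.2 ^ p) ∂π

/-- The transportation cost inequality `T_p(C)`: `W_p(μ,ν) ≤ √(2 C H(ν,μ))` for every
probability measure `ν`. -/
def TCI {E : Type*} [MetricSpace E] [MeasurableSpace E] (p : ℝ) (C : ℝ) (μ : Measure E) : Prop :=
  ∀ ν : Measure E, IsProbabilityMeasure ν →
    Wcost p μ ν ^ (1 / p) ≤ (ENNReal.ofReal (2 * C) * relEnt ν μ) ^ (1 / 2 : ℝ)

/-- auxiliary -/
theorem aux_main
    {E : Type*} [MetricSpace E]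
    [MeasurableSpace E] [BorelSpace E]
    (μ : Measure E) (hprob : IsProbabilityMeasure μ)
    (x₀ : E) (hmom : Integrable (fun y => dist y x₀ ^ 2) μ)
    (h : E → ℝ) (hmeas : Measurable h) (hpos : ∀ x, 0 ≤ h x)
    (hint : IsProbabilityMeasure (μ.withDensity fun x => ENNReal.ofReal (h x)))
    (hmomν : Integrable (fun x => dist x x₀ ^ 2) (μ.withDensity fun x => ENNReal.ofReal (h x)))
    (a : ℝ)
    (hpos' : 0 < (μ.withDensity fun x => ENNReal.ofReal (h x)) {x | h x ≤ a}) :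
    (⨅ (π : Measure (E × E)) (_ : IsProbabilityMeasure π)
        (_ : π.map Prod.fst = μ.withDensity (fun x => ENNReal.ofReal (h x)) ∧ π.map Prod.snd = μ),
      ∫⁻ z, ENNReal.ofReal (dist z.1 z.2 ^ (2:ℝ)) ∂π) ≤
      (⨅ (π : Measure (E × E)) (_ : IsProbabilityMeasure π)
        (_ : π.map Prod.fst =
            ((μ.withDensity fun x => ENNReal.ofReal (h x)) {x | h x ≤ a})⁻¹ •
              (μ.withDensity fun x => ENNReal.ofReal (h x)).restrict {x | h x ≤ a} ∧
          π.map Prod.snd = μ),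
        ∫⁻ z, ENNReal.ofReal (dist z.1 z.2 ^ (2:ℝ)) ∂π) +
        ENNReal.ofReal
          (∫ x in {x | a < h x},
            (2 * dist x x₀ ^ 2 + 2 * ∫ y, dist y x₀ ^ 2 ∂μ) * h x ∂μ) := by
  haveI := hprob; haveI := hint
  set ν : Measure E := μ.withDensity fun x => ENNReal.ofReal (h x) with hν
  set M : ℝ := ∫ y, dist y x₀ ^ 2 ∂μ with hM
  have hM0 : 0 ≤ M := integral_nonneg fun y => sq_nonneg _
  set s : Set E := {x | h x ≤ a} with hs
  have hsm : MeasurableSet s := measurableSet_le hmeas measurable_const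
  have hscompl : {x | a < h x} = sᶜ := by ext x; simp [hs, not_le]
  set c : ℝ≥0∞ := ν s with hc
  have hc0 : c ≠ 0 := hpos'.ne'
  have hc1 : c ≤ 1 := (measure_mono (Set.subset_univ s)).trans_eq measure_univ
  have hcfin : c ≠ ∞ := (hc1.trans_lt one_lt_top).ne
  set T : ℝ≥0∞ := ENNReal.ofReal (∫ x in {x | a < h x}, (2 * dist x x₀ ^ 2 + 2 * M) * h x ∂μ)
    with hT
  -- measurability helpers
  have hd2 : Measurable fun y : E => ENNReal.ofReal (dist y x₀ ^ 2) := by fun_prop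
  have hq1' : Measurable fun x : E => ENNReal.ofReal (2 * dist x x₀ ^ 2) := by fun_prop
  have hq1 : Measurable fun z : E × E => ENNReal.ofReal (2 * dist z.1 x₀ ^ 2) := by fun_prop
  have hq2 : Measurable fun z : E × E => ENNReal.ofReal (2 * dist z.2 x₀ ^ 2) := by fun_prop
  have hg' : Measurable fun x : E => ENNReal.ofReal (2 * dist x x₀ ^ 2 + 2 * M) := by fun_prop
  -- ρ : the "bad" part of ν
  set ρ : Measure E := ν.restrict sᶜ with hρ
  have hρuniv : ρ Set.univ = 1 - c := by
    rw [hρ, Measure.restrict_apply_univ, measure_compl hsm (measure_ne_top ν s), measure_univ]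
  haveI : IsFiniteMeasure ρ := by
    constructor
    rw [hρuniv]; exact (tsub_le_self.trans_lt one_lt_top)
  -- lintegral of dist² over μ
  have hlmom : ∫⁻ y, ENNReal.ofReal (dist y x₀ ^ 2) ∂μ = ENNReal.ofReal M := by
    rw [hM, ofReal_integral_eq_lintegral_ofReal hmom
      (Filter.Eventually.of_forall fun y => sq_nonneg _)]
  have hlmom2 : ∫⁻ y, ENNReal.ofReal (2 * dist y x₀ ^ 2) ∂μ = ENNReal.ofReal (2 * M) := by
    simp_rw [ENNReal.ofReal_mul (by norm_num : (0:ℝ) ≤ 2)]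
    rw [lintegral_const_mul _ hd2, hlmom]
  -- the tail term as a lintegral over ρ
  have hTρ : T = ∫⁻ x, ENNReal.ofReal (2 * dist x x₀ ^ 2 + 2 * M) ∂ρ := by
    have hgint : Integrable (fun x => 2 * dist x x₀ ^ 2 + 2 * M) ν :=
      (hmomν.const_mul 2).add (integrable_const _)
    have hgh : Integrable (fun x => (2 * dist x x₀ ^ 2 + 2 * M) * h x) μ := by
      have := (integrable_withDensity_iff (hmeas.ennreal_ofReal)
        (Filter.Eventually.of_forall fun x => ENNReal.ofReal_lt_top)
        (g := fun x => 2 * dist x x₀ ^ 2 + 2 * M)).mp hgint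
      refine this.congr (Filter.Eventually.of_forall fun x => ?_)
      simp [ENNReal.toReal_ofReal (hpos x)]
    have hnn : ∀ x, 0 ≤ (2 * dist x x₀ ^ 2 + 2 * M) * h x := fun x =>
      mul_nonneg (by positivity) (hpos x)
    rw [hT, hscompl, ofReal_integral_eq_lintegral_ofReal (hgh.restrict)
      (Filter.Eventually.of_forall hnn)]
    rw [hρ, hν, restrict_withDensity hsm.compl,
      lintegral_withDensity_eq_lintegral_mul _ (hmeas.ennreal_ofReal) hg']
    refine lintegral_congr fun x => ?_
    rw [Pi.mul_apply, mul_comm ((2:ℝ) * dist x x₀ ^ 2 + 2 * M),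
      ENNReal.ofReal_mul (hpos x), mul_comm]
  -- key estimate for a single coupling
  have key : ∀ π : Measure (E × E), IsProbabilityMeasure π →
      (π.map Prod.fst = c⁻¹ • ν.restrict s ∧ π.map Prod.snd = μ) →
      (⨅ (π' : Measure (E × E)) (_ : IsProbabilityMeasure π')
          (_ : π'.map Prod.fst = ν ∧ π'.map Prod.snd = μ),
        ∫⁻ z, ENNReal.ofReal (dist z.1 z.2 ^ (2:ℝ)) ∂π') ≤
        (∫⁻ z, ENNReal.ofReal (dist z.1 z.2 ^ (2:ℝ)) ∂π) + T := by
    intro π hπ hcoup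
    obtain ⟨hfst, hsnd⟩ := hcoup
    set π' : Measure (E × E) := c • π + ρ.prod μ with hπ'
    haveI : IsProbabilityMeasure π' := by
      constructor
      rw [hπ', Measure.add_apply, Measure.smul_apply, smul_eq_mul, measure_univ, mul_one,
        Measure.prod_apply MeasurableSet.univ]
      simp only [Set.preimage_univ, lintegral_const, measure_univ, one_mul]
      rw [hρuniv, add_tsub_cancel_of_le hc1]
    have hfst' : π'.map Prod.fst = ν := by
      rw [hπ', Measure.map_add _ _ measurable_fst, Measure.map_smul, hfst,
        Measure.map_fst_prod, measure_univ, one_smul, smul_smul,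
        ENNReal.mul_inv_cancel hc0 hcfin, one_smul, hρ,
        Measure.restrict_add_restrict_compl hsm]
    have hsnd' : π'.map Prod.snd = μ := by
      rw [hπ', Measure.map_add _ _ measurable_snd, Measure.map_smul, hsnd,
        Measure.map_snd_prod, hρuniv, ← add_smul, add_tsub_cancel_of_le hc1, one_smul]
    refine le_trans (iInf_le _ π') (le_trans (iInf_le _ ‹_›)
      (le_trans (iInf_le _ ⟨hfst', hsnd'⟩) ?_))
    -- compute the cost of π'
    rw [hπ', lintegral_add_measure, lintegral_smul_measure]
    gcongr
    · exact mul_le_of_le_one_left zero_le hc1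
    -- cost of the product part ≤ T
    calc ∫⁻ z, ENNReal.ofReal (dist z.1 z.2 ^ (2:ℝ)) ∂(ρ.prod μ)
        ≤ ∫⁻ z, (ENNReal.ofReal (2 * dist z.1 x₀ ^ 2) + ENNReal.ofReal (2 * dist z.2 x₀ ^ 2))
            ∂(ρ.prod μ) := by
          refine lintegral_mono fun z => ?_
          rw [← ENNReal.ofReal_add (by positivity) (by positivity),
            show (2:ℝ) = ((2:ℕ):ℝ) by norm_num, Real.rpow_natCast]
          refine ENNReal.ofReal_le_ofReal ?_
          have h1 : dist z.1 z.2 ≤ dist z.1 x₀ + dist z.2 x₀ := dist_triangle_right _ _ _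
          have h2 : dist z.1 z.2 ^ 2 ≤ (dist z.1 x₀ + dist z.2 x₀) ^ 2 :=
            pow_le_pow_left₀ dist_nonneg h1 2
          calc dist z.1 z.2 ^ 2 ≤ (dist z.1 x₀ + dist z.2 x₀) ^ 2 := h2
            _ ≤ 2 * dist z.1 x₀ ^ 2 + 2 * dist z.2 x₀ ^ 2 := by
                nlinarith [sq_nonneg (dist z.1 x₀ - dist z.2 x₀)]
      _ = (∫⁻ z, ENNReal.ofReal (2 * dist z.1 x₀ ^ 2) ∂(ρ.prod μ)) +
            ∫⁻ z, ENNReal.ofReal (2 * dist z.2 x₀ ^ 2) ∂(ρ.prod μ) :=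
          lintegral_add_left hq1 _
      _ = (∫⁻ x, ENNReal.ofReal (2 * dist x x₀ ^ 2) ∂ρ) +
            (∫⁻ y, ENNReal.ofReal (2 * dist y x₀ ^ 2) ∂μ) * (1 - c) := by
          congr 1
          · rw [MeasureTheory.lintegral_prod _ hq1.aemeasurable]
            simp only [lintegral_const, measure_univ, mul_one]
          · rw [MeasureTheory.lintegral_prod _ hq2.aemeasurable]
            simp only [show (fun x => ∫⁻ y, ENNReal.ofReal (2 * dist (x, y).2 x₀ ^ 2) ∂μ) =
              (fun _ : E => ∫⁻ y, ENNReal.ofReal (2 * dist y x₀ ^ 2) ∂μ) from rfl]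
            rw [lintegral_const, hρuniv]
      _ = (∫⁻ x, ENNReal.ofReal (2 * dist x x₀ ^ 2) ∂ρ) + ENNReal.ofReal (2 * M) * (1 - c) := by
          rw [hlmom2]
      _ = T := by
          rw [hTρ]
          rw [show (fun x => ENNReal.ofReal (2 * dist x x₀ ^ 2 + 2 * M)) =
            fun x => ENNReal.ofReal (2 * dist x x₀ ^ 2) + ENNReal.ofReal (2 * M) from
            funext fun x => (ENNReal.ofReal_add (by positivity) (by positivity))]
          rw [lintegral_add_right _ measurable_const, lintegral_const, hρuniv]
  -- conclude by taking the infimum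
  rw [ENNReal.iInf_add]
  refine le_iInf fun π => ?_
  rw [ENNReal.iInf_add]
  refine le_iInf fun hπ => ?_
  rw [ENNReal.iInf_add]
  exact le_iInf fun hcoup => key π hπ hcoup


/-- Inequality (3.6): `W₂²(ν,μ) ≤ W₂²(ν_a,μ) + ∫ q₂ h 1_{h>a} dμ`, where
`q₂(x) = 2 d(x,x₀)² + 2 ∫ d(y,x₀)² dμ(y)`. -/
theorem wcost_le_wcost_trunc_add_tail
    {E : Type*} [MetricSpace E] [CompleteSpace E] [TopologicalSpace.SeparableSpace E]
    [MeasurableSpace E] [BorelSpace E]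
    (μ : Measure E) (hprob : IsProbabilityMeasure μ)
    (x₀ : E) (hmom : Integrable (fun y => dist y x₀ ^ 2) μ)
    (h : E → ℝ) (hmeas : Measurable h) (hpos : ∀ x, 0 ≤ h x)
    (hint : IsProbabilityMeasure (densMeas μ h))
    (hmomν : Integrable (fun x => dist x x₀ ^ 2) (densMeas μ h))
    (a : ℝ) (ha : 0 < a) (hpos' : 0 < densMeas μ h {x | h x ≤ a}) :
    Wcost 2 (densMeas μ h) μ ≤
      Wcost 2 (truncMeas μ h a) μ +
        ENNReal.ofReal
          (∫ x in {x | a < h x},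
            (2 * dist x x₀ ^ 2 + 2 * ∫ y, dist y x₀ ^ 2 ∂μ) * h x ∂μ) := by
  exact aux_main μ hprob x₀ hmom h hmeas hpos hint hmomν a hpos'

end
end

section
/- Let (E,d) be a complete separable metric space and μ a Borel probability measure on E satisfying EI_ε(2): ∫ exp(ε·d(x,x₀)²) dμ(x) < ∞ for some ε > 0 and x₀ ∈ E. Then for every a > e^{3/2} there exists a constant c(a) such that for every probability measure ν = h·μ with 0 < H(ν,μ) ≤ 1/2, W₂²(ν,μ) ≤ W₂²(ν_a,μ) + c(a)·H(ν,μ)·log(1/H(ν,μ)). -/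
open MeasureTheory ENNReal
open scoped Classical

noncomputable section

/- ---------- auxiliary real lemmas ---------- -/

lemma young_aux (t u : ℝ) (ht : 0 ≤ t) : t * u ≤ t * Real.log t + Real.exp (u - 1) := by
  rcases eq_or_lt_of_le ht with h0 | h0
  · simp [← h0]; positivity
  · have h1 : u - Real.log t ≤ Real.exp (u - Real.log t - 1) := by
      have := Real.add_one_le_exp (u - Real.log t - 1)
      linarith
    have h2 : Real.exp (u - Real.log t - 1) = Real.exp (u - 1) / t := by
      rw [show u - Real.log t - 1 = (u - 1) - Real.log t by ring, Real.exp_sub, Real.exp_log h0]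
    rw [h2] at h1
    have h3 := mul_le_mul_of_nonneg_left h1 ht
    rw [mul_div_cancel₀ _ (ne_of_gt h0)] at h3
    nlinarith

lemma sub_one_le_mul_log (t : ℝ) (ht : 0 ≤ t) : t - 1 ≤ t * Real.log t := by
  rcases eq_or_lt_of_le ht with h0 | h0
  · simp [← h0]
  · have h1 : Real.log t⁻¹ ≤ t⁻¹ - 1 := Real.log_le_sub_one_of_pos (by positivity)
    rw [Real.log_inv] at h1
    have h3 := mul_le_mul_of_nonneg_left h1 ht
    have ht' : t * t⁻¹ = 1 := mul_inv_cancel₀ (ne_of_gt h0)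
    nlinarith

lemma log_inv_le (x : ℝ) (hx : 0 < x) : Real.log (1/x) ≤ 2 / Real.sqrt x := by
  have hs : 0 < Real.sqrt x := Real.sqrt_pos.2 hx
  have h1 : Real.log (1/Real.sqrt x) ≤ 1/Real.sqrt x - 1 :=
    Real.log_le_sub_one_of_pos (by positivity)
  have h2 : Real.log (1/x) = 2 * Real.log (1/Real.sqrt x) := by
    rw [one_div, one_div, Real.log_inv, Real.log_inv, Real.log_sqrt hx.le]; ring
  have h4 : 2 * (1/Real.sqrt x) = 2 / Real.sqrt x := mul_one_div 2 _
  rw [h2]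
  nlinarith

lemma xlogx_le (H x : ℝ) (hH : 0 < H) (hH2 : H ≤ 1/2) (hx : 0 ≤ x) (hx2 : x ≤ 2*H) :
    x * Real.log (1/x) ≤ 5 * H * Real.log (1/H) := by
  have h1H : (2:ℝ) ≤ 1/H := by rw [le_div_iff₀ hH]; linarith
  have hL : Real.log 2 ≤ Real.log (1/H) := Real.log_le_log (by norm_num) h1H
  have hlog2 : (0.6931471803 : ℝ) < Real.log 2 := Real.log_two_gt_d9
  have hLpos : 0 < Real.log (1/H) := by linarith
  rcases eq_or_lt_of_le hx with h0 | h0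
  · rw [← h0, zero_mul]; nlinarith
  by_cases hcase : x ≤ H^2
  · have hli := log_inv_le x h0
    have hs : 0 < Real.sqrt x := Real.sqrt_pos.2 h0
    have hxs : x / Real.sqrt x = Real.sqrt x := Real.div_sqrt
    have h1 : x * Real.log (1/x) ≤ 2 * Real.sqrt x := by
      calc x * Real.log (1/x) ≤ x * (2 / Real.sqrt x) :=
            mul_le_mul_of_nonneg_left hli hx
        _ = 2 * (x / Real.sqrt x) := by ring
        _ = 2 * Real.sqrt x := by rw [hxs]
    have h2 : Real.sqrt x ≤ H := by
      rw [show H = Real.sqrt (H^2) from (Real.sqrt_sq hH.le).symm]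
      exact Real.sqrt_le_sqrt hcase
    nlinarith
  · push_neg at hcase
    have h3 : Real.log (H^2) ≤ Real.log x := Real.log_le_log (by positivity) hcase.le
    rw [Real.log_pow] at h3
    have h4 : Real.log (1/x) ≤ 2 * Real.log (1/H) := by
      rw [one_div, one_div, Real.log_inv, Real.log_inv]
      push_cast at h3
      linarith
    calc x * Real.log (1/x) ≤ x * (2 * Real.log (1/H)) := by
          rcases le_or_gt (Real.log (1/x)) (2 * Real.log (1/H)) with h | h
          · exact mul_le_mul_of_nonneg_left h4 hx
          · linarith
      _ ≤ 5 * H * Real.log (1/H) := by nlinarith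

lemma final_real (ε Cε realH mIR L' : ℝ) (hε : 0 < ε) (hCε0 : 0 ≤ Cε)
    (hHpos : 0 < realH) (hHle : realH ≤ 1/2) (hm0 : 0 ≤ mIR) (hm2 : mIR ≤ 2*realH)
    (hxl : mIR * L' ≤ 5 * realH * Real.log (1/realH)) :
    2 * (ε⁻¹ * (realH + mIR + mIR * L' + mIR * Cε)) + 2*ε⁻¹*Cε*mIR
      ≤ 2*ε⁻¹*(11 + 8*Cε) * (realH * Real.log (1/realH)) := by
  set L := Real.log (1/realH) with hLdef
  have h1H : (2:ℝ) ≤ 1/realH := by rw [le_div_iff₀ hHpos]; linarith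
  have hL2 : Real.log 2 ≤ L := Real.log_le_log (by norm_num) h1H
  have hlog2 : (0.6931471803 : ℝ) < Real.log 2 := Real.log_two_gt_d9
  have hL12 : (1:ℝ) ≤ 2*L := by linarith
  have key : realH + mIR + mIR*L' + mIR*Cε + Cε*mIR ≤ (11+8*Cε)*(realH*L) := by
    nlinarith [hxl, mul_nonneg hHpos.le (by linarith : (0:ℝ) ≤ 2*L - 1),
      mul_nonneg hCε0 (mul_nonneg hHpos.le (by linarith : (0:ℝ) ≤ 2*L - 1)),
      mul_nonneg (by linarith : (0:ℝ) ≤ 2*realH - mIR) hCε0]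
  calc 2 * (ε⁻¹ * (realH + mIR + mIR * L' + mIR * Cε)) + 2*ε⁻¹*Cε*mIR
      = 2*ε⁻¹ * (realH + mIR + mIR*L' + mIR*Cε + Cε*mIR) := by ring
    _ ≤ 2*ε⁻¹ * ((11+8*Cε)*(realH*L)) := by
        have : (0:ℝ) ≤ 2*ε⁻¹ := by positivity
        exact mul_le_mul_of_nonneg_left key this
    _ = 2*ε⁻¹*(11 + 8*Cε) * (realH * L) := by ring

lemma entropy_facts {E : Type*} [MeasurableSpace E] (μ : Measure E) [IsProbabilityMeasure μ]
    (h : E → ℝ) (hmeas : Measurable h) (hpos : ∀ x, 0 ≤ h x)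
    (hνprob : IsProbabilityMeasure (densMeas μ h))
    (hfin : relEnt (densMeas μ h) μ ≠ ∞) :
    Integrable h μ ∧ (∫ x, h x ∂μ) = 1 ∧
      Integrable (fun x => h x * Real.log (h x)) μ ∧
      relEnt (densMeas μ h) μ = ENNReal.ofReal (∫ x, h x * Real.log (h x) ∂μ) := by
  have hlint : ∫⁻ x, ENNReal.ofReal (h x) ∂μ = 1 := by
    have := hνprob.measure_univ
    rwa [densMeas, withDensity_apply _ MeasurableSet.univ, Measure.restrict_univ] at this
  have int_h : Integrable h μ := by
    refine ⟨hmeas.aestronglyMeasurable, ?_⟩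
    rw [HasFiniteIntegral]
    have : ∀ x, ‖h x‖ₑ = ENNReal.ofReal (h x) := fun x => Real.enorm_eq_ofReal (hpos x)
    simp_rw [this, hlint]
    exact one_lt_top
  have int_one : (∫ x, h x ∂μ) = 1 := by
    rw [integral_eq_lintegral_of_nonneg_ae (ae_of_all _ hpos) hmeas.aestronglyMeasurable, hlint]
    simp
  rw [relEnt] at hfin ⊢
  split_ifs at hfin with hcond
  · obtain ⟨hac, hint⟩ := hcond
    have hrn : (densMeas μ h).rnDeriv μ =ᵐ[μ] fun x => ENNReal.ofReal (h x) :=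
      Measure.rnDeriv_withDensity μ hmeas.ennreal_ofReal
    have hrn' : (fun x => Real.log ((densMeas μ h).rnDeriv μ x).toReal) =ᵐ[μ]
        fun x => Real.log (h x) := by
      filter_upwards [hrn] with x hx
      rw [hx, ENNReal.toReal_ofReal (hpos x)]
    have hrnν : (fun x => Real.log ((densMeas μ h).rnDeriv μ x).toReal) =ᵐ[densMeas μ h]
        fun x => Real.log (h x) := hac.ae_le hrn'
    have hd : densMeas μ h = μ.withDensity fun x => ((h x).toNNReal : ℝ≥0∞) := rfl
    have hfnn : Measurable fun x => (h x).toNNReal := hmeas.real_toNNReal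
    have hintν : Integrable (fun x => Real.log (h x)) (densMeas μ h) := hint.congr hrnν
    have hint2 : Integrable (fun x => h x * Real.log (h x)) μ := by
      rw [hd] at hintν
      rw [integrable_withDensity_iff_integrable_smul hfnn] at hintν
      refine hintν.congr (ae_of_all _ fun x => ?_)
      simp [NNReal.smul_def, Real.coe_toNNReal _ (hpos x)]
    have hieq : ∫ x, Real.log ((densMeas μ h).rnDeriv μ x).toReal ∂(densMeas μ h)
        = ∫ x, h x * Real.log (h x) ∂μ := by
      rw [integral_congr_ae hrnν, hd, integral_withDensity_eq_integral_smul hfnn]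
      refine integral_congr_ae (ae_of_all _ fun x => ?_)
      simp [NNReal.smul_def, Real.coe_toNNReal _ (hpos x)]
    rw [if_pos ⟨hac, hint⟩, hieq]
    exact ⟨int_h, int_one, hint2, rfl⟩
  · exact absurd rfl hfin

set_option maxHeartbeats 2000000 in
/-- **Theorem 1.15 (1).** Under `EI_ε(2)`, for every `a > e^{3/2}` there is `c(a)` such that
for all `ν = h·μ` with `0 < H(ν,μ) ≤ 1/2`,
`W₂²(ν,μ) ≤ W₂²(ν_a,μ) + c(a) H(ν,μ) log(1/H(ν,μ))`. -/
theorem wcost_le_wcost_trunc_add_entropy_log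
    {E : Type*} [MetricSpace E] [CompleteSpace E] [TopologicalSpace.SeparableSpace E]
    [MeasurableSpace E] [BorelSpace E]
    (μ : Measure E) (hprob : IsProbabilityMeasure μ)
    (ε : ℝ) (hε : 0 < ε) (x₀ : E)
    (hEI : Integrable (fun x => Real.exp (ε * dist x x₀ ^ 2)) μ) :
    ∀ a > Real.exp (3 / 2), ∃ c : ℝ,
      ∀ h : E → ℝ, Measurable h → (∀ x, 0 ≤ h x) →
        IsProbabilityMeasure (densMeas μ h) →
        0 < relEnt (densMeas μ h) μ → relEnt (densMeas μ h) μ ≤ 1 / 2 →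
          Wcost 2 (densMeas μ h) μ ≤
            Wcost 2 (truncMeas μ h a) μ +
              ENNReal.ofReal
                (c * (relEnt (densMeas μ h) μ).toReal *
                  Real.log (1 / (relEnt (densMeas μ h) μ).toReal)) := by
  intro a ha
  have hea : (0:ℝ) < a := lt_trans (Real.exp_pos _) ha
  have hla : (3/2:ℝ) < Real.log a := (Real.lt_log_iff_exp_lt hea).2 ha
  have hCε0 : 0 ≤ ∫ x, Real.exp (ε * dist x x₀ ^ 2) ∂μ :=
    integral_nonneg fun x => (Real.exp_pos _).le
  set Cε := ∫ x, Real.exp (ε * dist x x₀ ^ 2) ∂μ with hCεdef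
  refine ⟨2*ε⁻¹*(11 + 8*Cε), fun h hmeas hpos hνprob hHpos hHle => ?_⟩
  obtain ⟨int_h, int_h_one, int_hlogh, hrel⟩ :=
    entropy_facts μ h hmeas hpos hνprob (ne_top_of_le_ne_top (by simp) hHle)
  set ν := densMeas μ h with hνdef
  set realH := ∫ x, h x * Real.log (h x) ∂μ with hrealHdef
  have hHpos' : 0 < realH := by
    rw [hrel] at hHpos; exact ENNReal.ofReal_pos.mp hHpos
  have hHle' : realH ≤ 1/2 := by
    have h2 := ENNReal.toReal_mono (by simp : (1/2 : ℝ≥0∞) ≠ ⊤) hHle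
    rw [hrel, ENNReal.toReal_ofReal hHpos'.le] at h2
    simpa using h2
  rw [hrel, ENNReal.toReal_ofReal hHpos'.le]
  set S := {x | h x ≤ a} with hSdef
  have hS : MeasurableSet S := measurableSet_le hmeas measurable_const
  have hνS : ν S + ν Sᶜ = 1 := by
    rw [measure_add_measure_compl hS]; exact measure_univ
  have hνSc : ν Sᶜ = ∫⁻ x in Sᶜ, ENNReal.ofReal (h x) ∂μ := by
    rw [hνdef, densMeas, withDensity_apply _ hS.compl]
  set mIR := ∫ x in Sᶜ, h x ∂μ with hmIRdef
  have hm_eq : ν Sᶜ = ENNReal.ofReal mIR := by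
    rw [hνSc, ← ofReal_integral_eq_lintegral_ofReal int_h.restrict (ae_of_all _ hpos)]
  have hmIR0 : 0 ≤ mIR := setIntegral_nonneg hS.compl (fun x _ => hpos x)
  -- pointwise facts on Sᶜ
  have hmemSc : ∀ x, x ∈ Sᶜ → a < h x := fun x hx => not_le.mp hx
  -- (log a - 1) * mIR ≤ realH
  have int_g : Integrable (fun x => h x * Real.log (h x) - h x + 1) μ :=
    (int_hlogh.sub int_h).add (integrable_const 1)
  have hF4 : (Real.log a - 1) * mIR ≤ realH := by
    have h1 : ∫ x in Sᶜ, (Real.log a - 1) * h x ∂μ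
        ≤ ∫ x in Sᶜ, (h x * Real.log (h x) - h x + 1) ∂μ := by
      refine setIntegral_mono_on ((int_h.const_mul _).integrableOn) int_g.integrableOn
        hS.compl (fun x hx => ?_)
      have hax := hmemSc x hx
      have hlg : Real.log a ≤ Real.log (h x) := Real.log_le_log hea hax.le
      nlinarith [hpos x]
    rw [integral_const_mul] at h1
    have h2 : ∫ x in Sᶜ, (h x * Real.log (h x) - h x + 1) ∂μ
        ≤ ∫ x, (h x * Real.log (h x) - h x + 1) ∂μ :=
      setIntegral_le_integral int_g
        (ae_of_all _ fun x => by
          have := sub_one_le_mul_log (h x) (hpos x)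
          show (0:ℝ) ≤ h x * Real.log (h x) - h x + 1
          linarith)
    have h3 : ∫ x, (h x * Real.log (h x) - h x + 1) ∂μ = realH := by
      have e1 : ∫ x, (h x * Real.log (h x) - h x + 1) ∂μ
          = (∫ x, (h x * Real.log (h x) - h x) ∂μ) + ∫ _x, (1:ℝ) ∂μ :=
        integral_add (int_hlogh.sub int_h) (integrable_const 1)
      have e2 : ∫ x, (h x * Real.log (h x) - h x) ∂μ = realH - 1 := by
        rw [show (fun x => h x * Real.log (h x) - h x) = fun x => h x * Real.log (h x) - h x from rfl]
        rw [integral_sub int_hlogh int_h, int_h_one]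
      rw [e1, e2]
      simp
    linarith
  have hmlt : mIR ≤ 2 * realH := by nlinarith
  -- split on whether the truncation is trivial
  by_cases hm0 : ν Sᶜ = 0
  · have hseq : ν S = 1 := by rw [← hνS, hm0, add_zero]
    have htr : truncMeas μ h a = ν := by
      rw [truncMeas, ← hνdef, ← hSdef, hseq, inv_one, one_smul]
      exact Measure.restrict_eq_self_of_ae_mem (ae_iff.2 hm0)
    rw [htr]
    exact self_le_add_right _ _
  · -- main branch: the complement has positive mass
    have hmpos : 0 < mIR := by
      rcases eq_or_lt_of_le hmIR0 with h0 | h0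
      · exact absurd (by rw [hm_eq, ← h0, ENNReal.ofReal_zero]) hm0
      · exact h0
    have hmlt1 : mIR < 1 := by nlinarith
    have hsne : ν S ≠ 0 := by
      intro h0
      rw [h0, zero_add, hm_eq] at hνS
      have h2 : ENNReal.ofReal mIR < 1 := ENNReal.ofReal_lt_one.2 hmlt1
      rw [hνS] at h2
      exact lt_irrefl _ h2
    have hsfin : ν S ≠ ⊤ := (measure_lt_top ν S).ne
    -- bound the entropy over Sᶜ
    have hSsplit : (∫ x in S, h x * Real.log (h x) ∂μ)
        + (∫ x in Sᶜ, h x * Real.log (h x) ∂μ) = realH := integral_add_compl hS int_hlogh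
    have hSsplit_h : (∫ x in S, h x ∂μ) + mIR = 1 := by
      have e := integral_add_compl hS int_h
      rw [int_h_one] at e
      rw [hmIRdef]
      exact e
    have hμS1 : (μ S).toReal ≤ 1 := by
      have h1 : (μ S).toReal ≤ (1 : ℝ≥0∞).toReal :=
        ENNReal.toReal_mono one_ne_top prob_le_one
      simpa using h1
    have hSlow : -mIR ≤ ∫ x in S, h x * Real.log (h x) ∂μ := by
      have h1 : ∫ x in S, (h x - 1) ∂μ ≤ ∫ x in S, h x * Real.log (h x) ∂μ :=
        setIntegral_mono_on ((int_h.sub (integrable_const 1)).integrableOn)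
          int_hlogh.integrableOn hS (fun x _ => sub_one_le_mul_log (h x) (hpos x))
      have h2 : ∫ x in S, (h x - 1) ∂μ = (∫ x in S, h x ∂μ) - (μ S).toReal := by
        have e1 : ∫ x in S, (h x - 1) ∂μ
            = (∫ x in S, h x ∂μ) - ∫ _x in S, (1:ℝ) ∂μ :=
          integral_sub int_h.integrableOn (integrable_const 1)
        rw [e1, setIntegral_const]
        simp
        rfl
      rw [h2] at h1
      linarith
    have hF6 : ∫ x in Sᶜ, h x * Real.log (h x) ∂μ ≤ realH + mIR := by linarith
    -- the quantity L' = log(1/m)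
    set L' := Real.log (1/mIR) with hL'def
    have hL'eq : L' = -Real.log mIR := by rw [hL'def, one_div, Real.log_inv]
    have hL'0 : 0 ≤ L' := by
      rw [hL'def]; apply Real.log_nonneg; rw [le_div_iff₀ hmpos]; linarith
    have hxl : mIR * L' ≤ 5 * realH * Real.log (1/realH) := by
      rw [hL'def]; exact xlogx_le realH mIR hHpos' hHle' hmIR0 hmlt
    have hfinal := final_real ε Cε realH mIR L' hε hCε0 hHpos' hHle' hmIR0 hmlt hxl
    -- integrability of the shifted exponential
    have int_exp1 : Integrable (fun x => Real.exp (ε * dist x x₀ ^ 2 - 1)) μ := by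
      have e1 : (fun x => Real.exp (ε * dist x x₀ ^ 2 - 1))
          = fun x => Real.exp (ε * dist x x₀ ^ 2) / Real.exp 1 := by
        funext x; rw [Real.exp_sub]
      rw [e1]; exact hEI.div_const _
    have hexp1_le : ∫ x, Real.exp (ε * dist x x₀ ^ 2 - 1) ∂μ ≤ Cε := by
      have e1 : ∫ x, Real.exp (ε * dist x x₀ ^ 2 - 1) ∂μ
          = (∫ x, Real.exp (ε * dist x x₀ ^ 2) ∂μ) / Real.exp 1 := by
        simp_rw [Real.exp_sub]
        exact integral_div _ _
      rw [e1, ← hCεdef]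
      exact div_le_self hCε0 (Real.one_le_exp zero_le_one)
    have hg0 : Measurable fun y : E => ENNReal.ofReal (dist y x₀ ^ 2) :=
      ((measurable_id.dist measurable_const).pow_const 2).ennreal_ofReal
    -- second moment of μ
    set J := ∫⁻ y, ENNReal.ofReal (dist y x₀ ^ 2) ∂μ with hJdef
    have hJ : J ≤ ENNReal.ofReal (ε⁻¹ * Cε) := by
      have hpt : ∀ y : E, dist y x₀ ^ 2 ≤ ε⁻¹ * Real.exp (ε * dist y x₀ ^ 2) := by
        intro y
        have h1 : ε * dist y x₀ ^ 2 ≤ Real.exp (ε * dist y x₀ ^ 2) := by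
          have := Real.add_one_le_exp (ε * dist y x₀ ^ 2); linarith
        calc dist y x₀ ^ 2 = ε⁻¹ * (ε * dist y x₀ ^ 2) := by field_simp
          _ ≤ ε⁻¹ * Real.exp (ε * dist y x₀ ^ 2) :=
              mul_le_mul_of_nonneg_left h1 (by positivity)
      calc J ≤ ∫⁻ y, ENNReal.ofReal (ε⁻¹ * Real.exp (ε * dist y x₀ ^ 2)) ∂μ :=
            lintegral_mono fun y => ENNReal.ofReal_le_ofReal (hpt y)
        _ = ENNReal.ofReal (∫ y, ε⁻¹ * Real.exp (ε * dist y x₀ ^ 2) ∂μ) :=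
            (ofReal_integral_eq_lintegral_ofReal (hEI.const_mul _)
              (ae_of_all _ fun y => by positivity)).symm
        _ = ENNReal.ofReal (ε⁻¹ * Cε) := by rw [integral_const_mul, ← hCεdef]
    -- the restricted measure
    set ρ₁ := ν.restrict Sᶜ with hρ₁def
    haveI : IsFiniteMeasure ρ₁ := by rw [hρ₁def]; infer_instance
    have hρ₁wd : ρ₁ = (μ.restrict Sᶜ).withDensity (fun x => ENNReal.ofReal (h x)) := by
      rw [hρ₁def, hνdef, densMeas, restrict_withDensity hS.compl]
    have hρ₁univ : ρ₁ Set.univ = ENNReal.ofReal mIR := by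
      rw [hρ₁def, Measure.restrict_apply_univ, hm_eq]
    -- the transport cost of the restricted part against μ
    set T1 := ∫⁻ x, ENNReal.ofReal (dist x x₀ ^ 2) ∂ρ₁ with hT1def
    have hq1m : Measurable fun x => ENNReal.ofReal (ε⁻¹ * (h x * Real.log (h x))) :=
      ((hmeas.mul (Real.measurable_log.comp hmeas)).const_mul ε⁻¹).ennreal_ofReal
    have hq2m : Measurable fun x => ENNReal.ofReal ((ε⁻¹ * L') * h x) :=
      (hmeas.const_mul _).ennreal_ofReal
    have hq3m : Measurable fun x =>
        ENNReal.ofReal (ε⁻¹ * mIR * Real.exp (ε * dist x x₀ ^ 2 - 1)) :=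
      ((((measurable_id.dist measurable_const).pow_const 2).const_mul ε).sub
        measurable_const).exp.const_mul _ |>.ennreal_ofReal
    have hT1 : T1 ≤ ENNReal.ofReal (ε⁻¹ * (realH + mIR + mIR * L' + mIR * Cε)) := by
      have e0 : T1 = ∫⁻ x in Sᶜ, ENNReal.ofReal (h x) * ENNReal.ofReal (dist x x₀ ^ 2) ∂μ := by
        rw [hT1def, hρ₁wd, lintegral_withDensity_eq_lintegral_mul _ hmeas.ennreal_ofReal hg0]
        rfl
      have hyoung : ∀ x ∈ Sᶜ, h x * dist x x₀ ^ 2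
          ≤ ε⁻¹ * (h x * Real.log (h x)) + (ε⁻¹ * L') * h x
            + ε⁻¹ * mIR * Real.exp (ε * dist x x₀ ^ 2 - 1) := by
        intro x hx
        have hax : a < h x := hmemSc x hx
        have h0x : 0 < h x := lt_trans hea hax
        have hY := young_aux (h x / mIR) (ε * dist x x₀ ^ 2) (by positivity)
        have hld : Real.log (h x / mIR) = Real.log (h x) + L' := by
          rw [Real.log_div (ne_of_gt h0x) (ne_of_gt hmpos), hL'eq]; ring
        have e1 : h x * (ε * dist x x₀ ^ 2) = mIR * (h x / mIR * (ε * dist x x₀ ^ 2)) := by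
          field_simp
        have e2 : mIR * (h x / mIR * Real.log (h x / mIR) + Real.exp (ε * dist x x₀ ^ 2 - 1))
            = h x * Real.log (h x) + h x * L' + mIR * Real.exp (ε * dist x x₀ ^ 2 - 1) := by
          rw [hld]
          field_simp
        have h5 : h x * (ε * dist x x₀ ^ 2)
            ≤ h x * Real.log (h x) + h x * L' + mIR * Real.exp (ε * dist x x₀ ^ 2 - 1) := by
          rw [e1, ← e2]
          exact mul_le_mul_of_nonneg_left hY hmpos.le
        have h6 : h x * dist x x₀ ^ 2 = ε⁻¹ * (h x * (ε * dist x x₀ ^ 2)) := by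
          field_simp
        have h7 := mul_le_mul_of_nonneg_left h5 (by positivity : (0:ℝ) ≤ ε⁻¹)
        rw [h6]
        linarith
      have hP1 : ∫⁻ x in Sᶜ, ENNReal.ofReal (ε⁻¹ * (h x * Real.log (h x))) ∂μ
          ≤ ENNReal.ofReal (ε⁻¹ * (realH + mIR)) := by
        rw [← ofReal_integral_eq_lintegral_ofReal
          ((int_hlogh.const_mul ε⁻¹).integrableOn)
          ((ae_restrict_iff' hS.compl).2 (ae_of_all _ fun x hx => by
            have hax := hmemSc x hx
            have h1x : (1:ℝ) ≤ h x :=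
              le_trans (le_trans (Real.one_le_exp (by norm_num)) ha.le) hax.le
            have hlnn : 0 ≤ Real.log (h x) := Real.log_nonneg h1x
            have := hpos x
            positivity))]
        apply ENNReal.ofReal_le_ofReal
        rw [integral_const_mul]
        exact mul_le_mul_of_nonneg_left hF6 (by positivity)
      have hP2 : ∫⁻ x in Sᶜ, ENNReal.ofReal ((ε⁻¹ * L') * h x) ∂μ
          = ENNReal.ofReal (ε⁻¹ * (mIR * L')) := by
        rw [← ofReal_integral_eq_lintegral_ofReal ((int_h.const_mul (ε⁻¹ * L')).integrableOn)
          (ae_of_all _ fun x => mul_nonneg (mul_nonneg (by positivity) hL'0) (hpos x))]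
        rw [integral_const_mul]
        congr 1
        rw [← hmIRdef]
        ring
      have hP3 : ∫⁻ x in Sᶜ, ENNReal.ofReal (ε⁻¹ * mIR * Real.exp (ε * dist x x₀ ^ 2 - 1)) ∂μ
          ≤ ENNReal.ofReal (ε⁻¹ * (mIR * Cε)) := by
        have hnn : (0:ℝ) ≤ ε⁻¹ * mIR := mul_nonneg (by positivity) hmIR0
        calc ∫⁻ x in Sᶜ, ENNReal.ofReal (ε⁻¹ * mIR * Real.exp (ε * dist x x₀ ^ 2 - 1)) ∂μ
            ≤ ∫⁻ x, ENNReal.ofReal (ε⁻¹ * mIR * Real.exp (ε * dist x x₀ ^ 2 - 1)) ∂μ :=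
              setLIntegral_le_lintegral _ _
          _ = ENNReal.ofReal (∫ x, ε⁻¹ * mIR * Real.exp (ε * dist x x₀ ^ 2 - 1) ∂μ) :=
              (ofReal_integral_eq_lintegral_ofReal (int_exp1.const_mul _)
                (ae_of_all _ fun x => mul_nonneg hnn (Real.exp_pos _).le)).symm
          _ ≤ ENNReal.ofReal (ε⁻¹ * (mIR * Cε)) := by
              apply ENNReal.ofReal_le_ofReal
              rw [integral_const_mul]
              calc (ε⁻¹ * mIR) * ∫ x, Real.exp (ε * dist x x₀ ^ 2 - 1) ∂μ
                  ≤ (ε⁻¹ * mIR) * Cε := mul_le_mul_of_nonneg_left hexp1_le hnn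
                _ = ε⁻¹ * (mIR * Cε) := by ring
      rw [e0]
      have hnn1 : (0:ℝ) ≤ ε⁻¹ * (realH + mIR) := by positivity
      have hnn2 : (0:ℝ) ≤ ε⁻¹ * (mIR * L') :=
        mul_nonneg (by positivity) (mul_nonneg hmIR0 hL'0)
      have hnn3 : (0:ℝ) ≤ ε⁻¹ * (mIR * Cε) :=
        mul_nonneg (by positivity) (mul_nonneg hmIR0 hCε0)
      calc ∫⁻ x in Sᶜ, ENNReal.ofReal (h x) * ENNReal.ofReal (dist x x₀ ^ 2) ∂μ
          ≤ ∫⁻ x in Sᶜ, (ENNReal.ofReal (ε⁻¹ * (h x * Real.log (h x)))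
              + ENNReal.ofReal ((ε⁻¹ * L') * h x)
              + ENNReal.ofReal (ε⁻¹ * mIR * Real.exp (ε * dist x x₀ ^ 2 - 1))) ∂μ := by
            refine setLIntegral_mono' hS.compl (fun x hx => ?_)
            rw [← ENNReal.ofReal_mul (hpos x)]
            refine le_trans (ENNReal.ofReal_le_ofReal (hyoung x hx)) ?_
            refine le_trans ENNReal.ofReal_add_le ?_
            gcongr
            exact ENNReal.ofReal_add_le
        _ = (∫⁻ x in Sᶜ, ENNReal.ofReal (ε⁻¹ * (h x * Real.log (h x))) ∂μ)
            + (∫⁻ x in Sᶜ, ENNReal.ofReal ((ε⁻¹ * L') * h x) ∂μ)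
            + (∫⁻ x in Sᶜ, ENNReal.ofReal (ε⁻¹ * mIR * Real.exp (ε * dist x x₀ ^ 2 - 1)) ∂μ) := by
            rw [lintegral_add_left (f := fun x => ENNReal.ofReal (ε⁻¹ * (h x * Real.log (h x))) + ENNReal.ofReal ((ε⁻¹ * L') * h x)) (hq1m.add hq2m), lintegral_add_left hq1m]
        _ ≤ ENNReal.ofReal (ε⁻¹ * (realH + mIR)) + ENNReal.ofReal (ε⁻¹ * (mIR * L'))
            + ENNReal.ofReal (ε⁻¹ * (mIR * Cε)) :=
            add_le_add (add_le_add hP1 (le_of_eq hP2)) hP3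
        _ = ENNReal.ofReal (ε⁻¹ * (realH + mIR + mIR * L' + mIR * Cε)) := by
            rw [← ENNReal.ofReal_add hnn1 hnn2, ← ENNReal.ofReal_add (by linarith) hnn3]
            congr 1
            ring
    -- the cost of the product coupling part
    set ρ := ρ₁.prod μ with hρdef
    have hd2meas : Measurable fun z : E × E => ENNReal.ofReal (dist z.1 z.2 ^ 2) :=
      ((measurable_fst.dist measurable_snd).pow_const 2).ennreal_ofReal
    have hinner : ∀ x : E, (∫⁻ y, ENNReal.ofReal (dist x y ^ 2) ∂μ)
        ≤ ENNReal.ofReal (2 * dist x x₀ ^ 2) + 2 * J := by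
      intro x
      have hpt : ∀ y, ENNReal.ofReal (dist x y ^ 2)
          ≤ ENNReal.ofReal (2 * dist x x₀ ^ 2) + ENNReal.ofReal (2 * dist y x₀ ^ 2) := by
        intro y
        refine le_trans (ENNReal.ofReal_le_ofReal ?_) ENNReal.ofReal_add_le
        have h1 : dist x y ≤ dist x x₀ + dist y x₀ := by
          have := dist_triangle x x₀ y
          rw [dist_comm x₀ y] at this
          linarith
        have h2 := pow_le_pow_left₀ dist_nonneg h1 2
        nlinarith [h2, sq_nonneg (dist x x₀ - dist y x₀)]
      calc (∫⁻ y, ENNReal.ofReal (dist x y ^ 2) ∂μ)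
          ≤ ∫⁻ y, (ENNReal.ofReal (2 * dist x x₀ ^ 2) + ENNReal.ofReal (2 * dist y x₀ ^ 2)) ∂μ :=
            lintegral_mono hpt
        _ = ENNReal.ofReal (2 * dist x x₀ ^ 2) * μ Set.univ
            + ∫⁻ y, ENNReal.ofReal (2 * dist y x₀ ^ 2) ∂μ := by
            rw [lintegral_add_left measurable_const, lintegral_const]
        _ = ENNReal.ofReal (2 * dist x x₀ ^ 2) + 2 * J := by
            rw [measure_univ, mul_one]
            congr 1
            have e3 : ∀ y : E, ENNReal.ofReal (2 * dist y x₀ ^ 2)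
                = 2 * ENNReal.ofReal (dist y x₀ ^ 2) := by
              intro y
              rw [ENNReal.ofReal_mul (by norm_num : (0:ℝ) ≤ 2)]
              norm_num
            simp_rw [e3]
            rw [lintegral_const_mul 2 hg0]
    have hcost_prod : (∫⁻ z, ENNReal.ofReal (dist z.1 z.2 ^ 2) ∂ρ)
        ≤ ENNReal.ofReal (2 * (ε⁻¹ * (realH + mIR + mIR * L' + mIR * Cε)) + 2*ε⁻¹*Cε*mIR) := by
      rw [hρdef, lintegral_prod _ hd2meas.aemeasurable]
      have e4 : ∀ x : E, ENNReal.ofReal (2 * dist x x₀ ^ 2)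
          = 2 * ENNReal.ofReal (dist x x₀ ^ 2) := by
        intro x
        rw [ENNReal.ofReal_mul (by norm_num : (0:ℝ) ≤ 2)]
        norm_num
      calc (∫⁻ x, ∫⁻ y, ENNReal.ofReal (dist x y ^ 2) ∂μ ∂ρ₁)
          ≤ ∫⁻ x, (ENNReal.ofReal (2 * dist x x₀ ^ 2) + 2 * J) ∂ρ₁ := lintegral_mono hinner
        _ = (∫⁻ x, ENNReal.ofReal (2 * dist x x₀ ^ 2) ∂ρ₁) + (2*J) * ρ₁ Set.univ := by
            rw [lintegral_add_right _ measurable_const, lintegral_const]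
        _ = 2 * T1 + (2*J) * ENNReal.ofReal mIR := by
            rw [hρ₁univ]
            congr 1
            simp_rw [e4]
            rw [lintegral_const_mul 2 hg0]
        _ ≤ 2 * ENNReal.ofReal (ε⁻¹ * (realH + mIR + mIR * L' + mIR * Cε))
            + (2 * ENNReal.ofReal (ε⁻¹ * Cε)) * ENNReal.ofReal mIR := by
            gcongr
        _ = ENNReal.ofReal (2 * (ε⁻¹ * (realH + mIR + mIR * L' + mIR * Cε)) + 2*ε⁻¹*Cε*mIR) := by
            have e5 : (2:ℝ≥0∞) = ENNReal.ofReal (2:ℝ) := by simp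
            have hA : (0:ℝ) ≤ ε⁻¹ * (realH + mIR + mIR * L' + mIR * Cε) := by
              have := mul_nonneg hmIR0 hL'0
              have := mul_nonneg hmIR0 hCε0
              positivity
            rw [e5, ← ENNReal.ofReal_mul (by norm_num), ← ENNReal.ofReal_mul (by norm_num),
              ← ENNReal.ofReal_mul (by positivity), ← ENNReal.ofReal_add (by positivity)
                (by positivity)]
            congr 1
            ring
    -- rewrite Wcost with natural powers
    have hWeq : ∀ (α β : Measure E), Wcost 2 α β
        = ⨅ (π : Measure (E × E)) (_ : IsProbabilityMeasure π) (_ : IsCoupling π α β),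
            ∫⁻ z, ENNReal.ofReal (dist z.1 z.2 ^ 2) ∂π := by
      intro α β
      rw [Wcost]
      refine iInf_congr fun π => iInf_congr fun _ => iInf_congr fun _ =>
        lintegral_congr fun z => ?_
      rw [show ((2:ℝ)) = ((2:ℕ):ℝ) by norm_num, Real.rpow_natCast]
    rw [hWeq, hWeq]
    have key : ∀ πa : Measure (E × E), IsProbabilityMeasure πa →
        IsCoupling πa (truncMeas μ h a) μ →
        (⨅ (π : Measure (E × E)) (_ : IsProbabilityMeasure π) (_ : IsCoupling π ν μ),
            ∫⁻ z, ENNReal.ofReal (dist z.1 z.2 ^ 2) ∂π)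
          ≤ (∫⁻ z, ENNReal.ofReal (dist z.1 z.2 ^ 2) ∂πa)
            + ENNReal.ofReal (2*ε⁻¹*(11 + 8*Cε) * realH * Real.log (1/realH)) := by
      intro πa hπaprob hπacoup
      set π := (ν S) • πa + ρ with hπdef
      have hρuniv : ρ Set.univ = ENNReal.ofReal mIR := by
        rw [hρdef, ← Set.univ_prod_univ, Measure.prod_prod, hρ₁univ, measure_univ, mul_one]
      have hπprob : IsProbabilityMeasure π := by
        constructor
        rw [hπdef, Measure.add_apply, Measure.smul_apply, smul_eq_mul,
          hπaprob.measure_univ, mul_one, hρuniv, ← hm_eq]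
        exact hνS
      have hπcoup : IsCoupling π ν μ := by
        constructor
        · rw [hπdef, Measure.map_add _ _ measurable_fst, Measure.map_smul,
            hπacoup.1, hρdef, Measure.map_fst_prod, measure_univ, one_smul]
          rw [truncMeas, ← hνdef, ← hSdef, smul_smul,
            ENNReal.mul_inv_cancel hsne hsfin, one_smul, hρ₁def]
          exact Measure.restrict_add_restrict_compl hS
        · rw [hπdef, Measure.map_add _ _ measurable_snd, Measure.map_smul,
            hπacoup.2, hρdef, Measure.map_snd_prod]
          rw [hρ₁univ, ← hm_eq, ← add_smul, hνS, one_smul]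
      refine le_trans (iInf_le_of_le π (iInf_le_of_le hπprob (iInf_le _ hπcoup))) ?_
      rw [hπdef, lintegral_add_measure, lintegral_smul_measure]
      refine add_le_add ?_ ?_
      · calc ν S * ∫⁻ z, ENNReal.ofReal (dist z.1 z.2 ^ 2) ∂πa
            ≤ 1 * ∫⁻ z, ENNReal.ofReal (dist z.1 z.2 ^ 2) ∂πa :=
              mul_le_mul_left prob_le_one _
          _ = _ := one_mul _
      · refine le_trans hcost_prod ?_
        refine le_trans (ENNReal.ofReal_le_ofReal hfinal) ?_
        apply le_of_eq
        congr 1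
        ring
    simp only [ENNReal.iInf_add]
    exact le_iInf fun πa => le_iInf fun h1 => le_iInf fun h2 => key πa h1 h2

end
end

section
/- Let (E,d) be a complete separable metric space and μ a Borel probability measure on E satisfying the transportation cost inequality T₁(C). Then for every Borel set A with μ(A) > 0 and every r ≥ √(2C·log(1/μ(A))), the set A_r^c = { x ∈ E : d(x,A) ≥ r } satisfies μ(A_r^c) ≤ exp( −(1/(2C))·( r − √(2C·log(1/μ(A))) )² ). -/
open MeasureTheory ENNReal
open scoped Classical

noncomputable section

/-- The conditional measure `μ(·|S)` is a probability measure when `μ S ≠ 0`. -/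
lemma aux_cond_prob {E : Type*} [MeasurableSpace E] (μ : Measure E) [IsProbabilityMeasure μ]
    {S : Set E} (hpos : μ S ≠ 0) :
    IsProbabilityMeasure ((μ S)⁻¹ • μ.restrict S) := by
  constructor
  rw [Measure.smul_apply, Measure.restrict_apply MeasurableSet.univ, Set.univ_inter,
    smul_eq_mul, ENNReal.inv_mul_cancel hpos (measure_ne_top μ S)]

/-- The conditional measure `μ(·|S)` is concentrated on `S`. -/
lemma aux_cond_compl {E : Type*} [MeasurableSpace E] (μ : Measure E)
    {S : Set E} (hS : MeasurableSet S) :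
    ∀ᵐ x ∂((μ S)⁻¹ • μ.restrict S), x ∈ S := by
  rw [ae_iff]
  have h : {x | ¬ x ∈ S} = Sᶜ := rfl
  rw [h, Measure.smul_apply, Measure.restrict_apply hS.compl, Set.compl_inter_self,
    measure_empty, smul_eq_mul, mul_zero]

/-- Relative entropy of a conditional measure: `H(μ(·|S), μ) = log (1/μ(S))`. -/
lemma aux_relEnt {E : Type*} [MeasurableSpace E] (μ : Measure E) [IsProbabilityMeasure μ]
    {S : Set E} (hS : MeasurableSet S) (hpos : μ S ≠ 0) :
    relEnt ((μ S)⁻¹ • μ.restrict S) μ = ENNReal.ofReal (Real.log (1 / (μ S).toReal)) := by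
  haveI := aux_cond_prob μ hpos
  set c : ℝ≥0∞ := (μ S)⁻¹ with hc
  set ν := c • μ.restrict S with hν
  have hνd : ν = μ.withDensity (S.indicator fun _ => c) := by
    rw [withDensity_indicator hS, withDensity_const]
  have hac : ν ≪ μ := hνd ▸ withDensity_absolutelyContinuous μ _
  have hmeas : Measurable (S.indicator fun _ => c) := measurable_const.indicator hS
  have hrn : ν.rnDeriv μ =ᵐ[μ] S.indicator fun _ => c := by
    rw [hνd]; exact Measure.rnDeriv_withDensity μ hmeas
  have hrnν : ν.rnDeriv μ =ᵐ[ν] S.indicator fun _ => c := hac.ae_eq hrn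
  have hSν : ∀ᵐ x ∂ν, x ∈ S := aux_cond_compl μ hS
  have hcongr : (fun x => Real.log ((ν.rnDeriv μ) x).toReal)
      =ᵐ[ν] fun _ => Real.log (1 / (μ S).toReal) := by
    filter_upwards [hrnν, hSν] with x hx hxS
    rw [hx, Set.indicator_of_mem hxS, hc, ENNReal.toReal_inv, one_div]
  have hint : Integrable (fun x => Real.log ((ν.rnDeriv μ) x).toReal) ν :=
    (integrable_const _).congr hcongr.symm
  rw [relEnt, if_pos ⟨hac, hint⟩]
  congr 1
  rw [integral_congr_ae hcongr, integral_const, probReal_univ, one_smul]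

/-- Marton's coupling lower bound: if `B` is at distance `≥ r` from `A`, then
`r ≤ W₁(μ, μ(·|A)) + W₁(μ, μ(·|B))`. -/
lemma aux_lb {E : Type*} [MetricSpace E] [SecondCountableTopology E] [MeasurableSpace E]
    [BorelSpace E]
    (μ : Measure E) [IsProbabilityMeasure μ] {A B : Set E} (hA : MeasurableSet A)
    (hB : MeasurableSet B) (hBpos : μ B ≠ 0) {r : ℝ}
    (hAB : ∀ x ∈ B, r ≤ Metric.infDist x A) :
    ENNReal.ofReal r ≤
      Wcost 1 μ ((μ A)⁻¹ • μ.restrict A) + Wcost 1 μ ((μ B)⁻¹ • μ.restrict B) := by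
  set νA := (μ A)⁻¹ • μ.restrict A with hνA
  set νB := (μ B)⁻¹ • μ.restrict B with hνB
  set F : E → ℝ≥0∞ := fun x => ENNReal.ofReal (Metric.infDist x A) with hF
  have hFm : Measurable F := (Metric.continuous_infDist_pt A).measurable.ennreal_ofReal
  have hdm : Measurable fun z : E × E => ENNReal.ofReal (dist z.1 z.2) :=
    measurable_dist.ennreal_ofReal
  have key : ∀ π₁ π₂ : Measure (E × E), IsProbabilityMeasure π₁ → IsCoupling π₁ μ νA →
      IsProbabilityMeasure π₂ → IsCoupling π₂ μ νB →
      ENNReal.ofReal r ≤ (∫⁻ z, ENNReal.ofReal (dist z.1 z.2 ^ (1:ℝ)) ∂π₁) +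
        ∫⁻ z, ENNReal.ofReal (dist z.1 z.2 ^ (1:ℝ)) ∂π₂ := by
    intro π₁ π₂ h₁ hc₁ h₂ hc₂
    simp only [Real.rpow_one]
    have hFA : ∫⁻ x, F x ∂νA = 0 := by
      rw [lintegral_eq_zero_iff hFm]
      filter_upwards [aux_cond_compl μ hA] with x hx
      simp [hF, Metric.infDist_zero_of_mem hx]
    have hpt1 : ∀ z : E × E, F z.1 ≤ F z.2 + ENNReal.ofReal (dist z.1 z.2) := by
      intro z
      calc F z.1 ≤ ENNReal.ofReal (Metric.infDist z.2 A + dist z.1 z.2) :=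
            ENNReal.ofReal_le_ofReal Metric.infDist_le_infDist_add_dist
        _ ≤ _ := ENNReal.ofReal_add_le
    have hpt2 : ∀ z : E × E, F z.2 ≤ F z.1 + ENNReal.ofReal (dist z.1 z.2) := by
      intro z
      calc F z.2 ≤ ENNReal.ofReal (Metric.infDist z.1 A + dist z.2 z.1) :=
            ENNReal.ofReal_le_ofReal Metric.infDist_le_infDist_add_dist
        _ = ENNReal.ofReal (Metric.infDist z.1 A + dist z.1 z.2) := by rw [dist_comm]
        _ ≤ _ := ENNReal.ofReal_add_le
    have hm1fst : ∫⁻ z, F z.1 ∂π₁ = ∫⁻ x, F x ∂μ := by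
      rw [← hc₁.1, lintegral_map hFm measurable_fst]
    have hm1snd : ∫⁻ z, F z.2 ∂π₁ = ∫⁻ x, F x ∂νA := by
      rw [← hc₁.2, lintegral_map hFm measurable_snd]
    have hm2fst : ∫⁻ z, F z.1 ∂π₂ = ∫⁻ x, F x ∂μ := by
      rw [← hc₂.1, lintegral_map hFm measurable_fst]
    have hm2snd : ∫⁻ z, F z.2 ∂π₂ = ∫⁻ x, F x ∂νB := by
      rw [← hc₂.2, lintegral_map hFm measurable_snd]
    have hμle : ∫⁻ x, F x ∂μ ≤ ∫⁻ z, ENNReal.ofReal (dist z.1 z.2) ∂π₁ := by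
      calc ∫⁻ x, F x ∂μ = ∫⁻ z, F z.1 ∂π₁ := hm1fst.symm
        _ ≤ ∫⁻ z, (F z.2 + ENNReal.ofReal (dist z.1 z.2)) ∂π₁ := lintegral_mono fun z => hpt1 z
        _ = (∫⁻ z, F z.2 ∂π₁) + ∫⁻ z, ENNReal.ofReal (dist z.1 z.2) ∂π₁ :=
            lintegral_add_right _ hdm
        _ = ∫⁻ z, ENNReal.ofReal (dist z.1 z.2) ∂π₁ := by rw [hm1snd, hFA, zero_add]
    have hBle : ∫⁻ x, F x ∂νB ≤ (∫⁻ x, F x ∂μ) + ∫⁻ z, ENNReal.ofReal (dist z.1 z.2) ∂π₂ := by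
      calc ∫⁻ x, F x ∂νB = ∫⁻ z, F z.2 ∂π₂ := hm2snd.symm
        _ ≤ ∫⁻ z, (F z.1 + ENNReal.ofReal (dist z.1 z.2)) ∂π₂ := lintegral_mono fun z => hpt2 z
        _ = (∫⁻ z, F z.1 ∂π₂) + ∫⁻ z, ENNReal.ofReal (dist z.1 z.2) ∂π₂ :=
            lintegral_add_right _ hdm
        _ = _ := by rw [hm2fst]
    have hrB : ENNReal.ofReal r ≤ ∫⁻ x, F x ∂νB := by
      haveI : IsProbabilityMeasure νB := aux_cond_prob μ hBpos
      calc ENNReal.ofReal r = ∫⁻ _, ENNReal.ofReal r ∂νB := by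
            rw [lintegral_const, measure_univ, mul_one]
        _ ≤ ∫⁻ x, F x ∂νB := by
            refine lintegral_mono_ae ?_
            filter_upwards [aux_cond_compl μ hB] with x hx
            exact ENNReal.ofReal_le_ofReal (hAB x hx)
    calc ENNReal.ofReal r ≤ ∫⁻ x, F x ∂νB := hrB
      _ ≤ (∫⁻ x, F x ∂μ) + ∫⁻ z, ENNReal.ofReal (dist z.1 z.2) ∂π₂ := hBle
      _ ≤ (∫⁻ z, ENNReal.ofReal (dist z.1 z.2) ∂π₁) +
            ∫⁻ z, ENNReal.ofReal (dist z.1 z.2) ∂π₂ := add_le_add_left hμle _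
  rw [Wcost, Wcost]
  simp only [ENNReal.iInf_add, ENNReal.add_iInf]
  exact le_iInf fun π₂ => le_iInf fun h₂ => le_iInf fun hc₂ => le_iInf fun π₁ =>
    le_iInf fun h₁ => le_iInf fun hc₁ => key π₁ π₂ h₁ hc₁ h₂ hc₂

/-- Gaussian concentration from `T₁(C)` (Marton's argument, inequality (1.3)): for every Borel
set `A` with `μ(A) > 0` and every `r ≥ √(2C log(1/μ(A)))`,
`μ(A_r^c) ≤ exp(-(1/2C)(r - √(2C log(1/μ(A))))²)`. -/
theorem concentration_of_t1
    {E : Type*} [MetricSpace E] [CompleteSpace E] [TopologicalSpace.SeparableSpace E]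
    [MeasurableSpace E] [BorelSpace E]
    (μ : Measure E) (hprob : IsProbabilityMeasure μ)
    (C : ℝ) (hC : 0 < C) (hT1 : TCI 1 C μ)
    (A : Set E) (hA : MeasurableSet A) (hApos : 0 < μ A)
    (r : ℝ) (hr : Real.sqrt (2 * C * Real.log (1 / (μ A).toReal)) ≤ r) :
    μ {x | r ≤ Metric.infDist x A} ≤
      ENNReal.ofReal
        (Real.exp (-(1 / (2 * C)) *
          (r - Real.sqrt (2 * C * Real.log (1 / (μ A).toReal))) ^ 2)) := by
  haveI := hprob
  set a := Real.sqrt (2 * C * Real.log (1 / (μ A).toReal)) with ha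
  set B := {x | r ≤ Metric.infDist x A} with hBdef
  have hBmeas : MeasurableSet B :=
    (isClosed_le continuous_const (Metric.continuous_infDist_pt A)).measurableSet
  by_cases hB0 : μ B = 0
  · rw [hB0]; exact zero_le
  have hA0 : μ A ≠ 0 := hApos.ne'
  haveI instA : IsProbabilityMeasure ((μ A)⁻¹ • μ.restrict A) := aux_cond_prob μ hA0
  haveI instB : IsProbabilityMeasure ((μ B)⁻¹ • μ.restrict B) := aux_cond_prob μ hB0
  set b := Real.sqrt (2 * C * Real.log (1 / (μ B).toReal)) with hb
  -- positivity facts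
  have htApos : 0 < (μ A).toReal := ENNReal.toReal_pos hA0 (measure_ne_top μ A)
  have htBpos : 0 < (μ B).toReal := ENNReal.toReal_pos hB0 (measure_ne_top μ B)
  have htAle : (μ A).toReal ≤ 1 := by
    rw [← ENNReal.toReal_one]
    exact ENNReal.toReal_mono one_ne_top prob_le_one
  have htBle : (μ B).toReal ≤ 1 := by
    rw [← ENNReal.toReal_one]
    exact ENNReal.toReal_mono one_ne_top prob_le_one
  have hlogA : 0 ≤ Real.log (1 / (μ A).toReal) :=
    Real.log_nonneg (one_le_one_div htApos htAle)
  have hlogB : 0 ≤ Real.log (1 / (μ B).toReal) :=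
    Real.log_nonneg (one_le_one_div htBpos htBle)
  have h2C : (0:ℝ) < 2 * C := by linarith
  have hprodA : 0 ≤ 2 * C * Real.log (1 / (μ A).toReal) := by positivity
  have hprodB : 0 ≤ 2 * C * Real.log (1 / (μ B).toReal) := by positivity
  -- TCI bounds
  have hWA := hT1 _ instA
  have hWB := hT1 _ instB
  rw [aux_relEnt μ hA hA0] at hWA
  rw [aux_relEnt μ hBmeas hB0] at hWB
  have hrw : ∀ s : ℝ, 0 ≤ s →
      (ENNReal.ofReal (2 * C) * ENNReal.ofReal s) ^ (1 / 2 : ℝ)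
        = ENNReal.ofReal (Real.sqrt (2 * C * s)) := by
    intro s hs
    rw [← ENNReal.ofReal_mul h2C.le,
      ENNReal.ofReal_rpow_of_nonneg (by positivity) (by norm_num), Real.sqrt_eq_rpow]
  rw [hrw _ hlogA, show (1:ℝ)/1 = 1 by norm_num, ENNReal.rpow_one] at hWA
  rw [hrw _ hlogB, show (1:ℝ)/1 = 1 by norm_num, ENNReal.rpow_one] at hWB
  -- combine with the coupling lower bound
  have hkey : ENNReal.ofReal r ≤ ENNReal.ofReal a + ENNReal.ofReal b :=
    le_trans (aux_lb μ hA hBmeas hB0 fun x hx => hx) (add_le_add hWA hWB)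
  rw [← ENNReal.ofReal_add (Real.sqrt_nonneg _) (Real.sqrt_nonneg _)] at hkey
  have hab : r ≤ a + b :=
    (ENNReal.ofReal_le_ofReal_iff (add_nonneg (Real.sqrt_nonneg _) (Real.sqrt_nonneg _))).mp hkey
  have hra : 0 ≤ r - a := by linarith
  have h1 : r - a ≤ b := by linarith
  have h2 : (r - a) ^ 2 ≤ 2 * C * Real.log (1 / (μ B).toReal) := by
    calc (r - a) ^ 2 ≤ b ^ 2 := pow_le_pow_left₀ hra h1 2
      _ = 2 * C * Real.log (1 / (μ B).toReal) := Real.sq_sqrt hprodB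
  rw [one_div, Real.log_inv] at h2
  have h3 : Real.log (μ B).toReal ≤ -(1 / (2 * C)) * (r - a) ^ 2 := by
    rw [neg_mul, le_neg, one_div, inv_mul_eq_div, div_le_iff₀ h2C]
    linarith
  have h4 : (μ B).toReal ≤ Real.exp (-(1 / (2 * C)) * (r - a) ^ 2) :=
    (Real.log_le_iff_le_exp htBpos).mp h3
  calc μ B = ENNReal.ofReal (μ B).toReal := (ENNReal.ofReal_toReal (measure_ne_top μ B)).symm
    _ ≤ _ := ENNReal.ofReal_le_ofReal h4

end
end
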